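/- Let V be a *-vector space with a downward filtered family of cones {C_α : α ∈ Γ}, each contained in the hermitian elements V_h, satisfying ⋂_α (C_α ∩ -C_α) = {0}, and let e be an Archimedean matrix order unit. For X ∈ M_n(V) define ‖X‖_α^n = inf { r ≥ 0 : [[r·e_n, X],[X*, r·e_n]] ∈ C_α^{2n} }. Then for each α and n, ‖·‖_α^n is a seminorm on M_n(V) satisfying ‖X*‖_α^n = ‖X‖_α^n, and the family {‖·‖_α^n : α ∈ Γ} is separating, i.e. ‖X‖_α^n = 0 for all α implies X = 0. -/

import Mathlib

open scoped ComplexOrder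

noncomputable section

variable {V : Type} [AddCommGroup V] [Module ℂ V]

/-- Conjugation `Xᴴ A X` of a `V`-valued matrix by a scalar matrix `X`. -/
def sconj {n m : ℕ} (X : Matrix (Fin n) (Fin m) ℂ)
    (A : Matrix (Fin n) (Fin n) V) : Matrix (Fin m) (Fin m) V :=
  Matrix.of fun i j => ∑ p, ∑ q, ((starRingEnd ℂ) (X p i) * X q j) • A p q

/-- A (not necessarily proper) cone in a complex vector space. -/
def IsVCone {M : Type} [AddCommGroup M] [Module ℂ M] (C : Set M) : Prop :=
  (0 : M) ∈ C ∧ (∀ x ∈ C, ∀ y ∈ C, x + y ∈ C) ∧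
    ∀ r : ℝ, 0 ≤ r → ∀ x ∈ C, (r : ℂ) • x ∈ C

/-- A 2×2 block matrix of `n × n` blocks, reindexed to `Fin (n+n)`. -/
def blk {n : ℕ} (A B C D : Matrix (Fin n) (Fin n) V) :
    Matrix (Fin (n + n)) (Fin (n + n)) V :=
  Matrix.reindex finSumFinEquiv finSumFinEquiv (Matrix.fromBlocks A B C D)

/-- The diagonal matrix `diag (e, …, e)`. -/
def diagE (e : V) (n : ℕ) : Matrix (Fin n) (Fin n) V :=
  Matrix.diagonal fun _ => e

variable [StarAddMonoid V] [StarModule ℂ V]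

/-- The seminorm at level `(α, n)` induced by the matrix cones `C` and the unit `e`:
`‖X‖_α^n = inf { r ≥ 0 : [[r eₙ, X],[X*, r eₙ]] ∈ C_α^{2n} }`. -/
def nrm {Γ : Type} (C : Γ → (k : ℕ) → Set (Matrix (Fin k) (Fin k) V)) (e : V)
    (α : Γ) (n : ℕ) (X : Matrix (Fin n) (Fin n) V) : ℝ :=
  sInf {r : ℝ | 0 ≤ r ∧
    blk ((r : ℂ) • diagE e n) X (star X) ((r : ℂ) • diagE e n) ∈ C α (n + n)}

/-- A local matrix *-ordering on `V`: a downward filtered family of compatible matrix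
cones of hermitian matrices whose total intersection with their negatives is trivial. -/
structure LMOrder (Γ : Type) (V : Type) [AddCommGroup V] [Module ℂ V]
    [StarAddMonoid V] [StarModule ℂ V] where
  C : Γ → (n : ℕ) → Set (Matrix (Fin n) (Fin n) V)
  cone : ∀ α n, IsVCone (C α n)
  herm : ∀ α n, ∀ A ∈ C α n, star A = A
  filtered : ∀ α β : Γ, ∃ γ, ∀ n, C γ n ⊆ C α n ∩ C β n
  proper : ∀ n (A : Matrix (Fin n) (Fin n) V), (∀ α, A ∈ C α n ∧ -A ∈ C α n) → A = 0
  compat : ∀ (α : Γ) (n m : ℕ) (X : Matrix (Fin n) (Fin m) ℂ),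
    ∀ A ∈ C α n, sconj X A ∈ C α m

/-- An abstract local operator system: a local matrix *-ordering together with an
Archimedean matrix order unit. -/
structure LocalOpSys (Γ : Type) (V : Type) [AddCommGroup V] [Module ℂ V]
    [StarAddMonoid V] [StarModule ℂ V] extends LMOrder Γ V where
  e : V
  eherm : star e = e
  unit : ∀ (α : Γ) (n : ℕ) (A : Matrix (Fin n) (Fin n) V), star A = A →
    ∃ r : ℝ, 0 < r ∧ (r : ℂ) • diagE e n - A ∈ C α n
  arch : ∀ (α : Γ) (n : ℕ) (A : Matrix (Fin n) (Fin n) V),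
    (∀ r : ℝ, 0 < r → (r : ℂ) • diagE e n + A ∈ C α n) → A ∈ C α n

/-- An Archimedean local order unit space (`A.L.O.U.` space): ground-level cones only. -/
structure ALOU (Γ : Type) (V : Type) [AddCommGroup V] [Module ℂ V]
    [StarAddMonoid V] [StarModule ℂ V] where
  pos : Γ → Set V
  cone : ∀ α, IsVCone (pos α)
  herm : ∀ α, ∀ v ∈ pos α, star v = v
  filtered : ∀ α β : Γ, ∃ γ, pos γ ⊆ pos α ∩ pos β
  proper : ∀ v : V, (∀ α, v ∈ pos α ∧ -v ∈ pos α) → v = 0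
  e : V
  eherm : star e = e
  unit : ∀ (α : Γ) (v : V), star v = v → ∃ r : ℝ, 0 < r ∧ (r : ℂ) • e - v ∈ pos α
  arch : ∀ (α : Γ) (v : V), (∀ r : ℝ, 0 < r → (r : ℂ) • e + v ∈ pos α) → v ∈ pos α

/-- The minimal matrix cones over a family of ground-level cones. -/
def Cmin {Γ : Type} (pos : Γ → Set V) (α : Γ) (n : ℕ) :
    Set (Matrix (Fin n) (Fin n) V) :=
  {A | ∀ L : Fin n → ℂ, (∑ i, ∑ j, ((starRingEnd ℂ) (L i) * L j) • A i j) ∈ pos α}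

/-- The maximal matrix cones over a family of ground-level cones:
sums `Σ aᵢ ⊗ vᵢ` with `aᵢ` positive semidefinite scalar matrices and `vᵢ` positive. -/
def Dmax {Γ : Type} (pos : Γ → Set V) (α : Γ) (n : ℕ) :
    Set (Matrix (Fin n) (Fin n) V) :=
  {A | ∃ (k : ℕ) (a : Fin k → Matrix (Fin n) (Fin n) ℂ) (v : Fin k → V),
    (∀ i, (a i).PosSemidef) ∧ (∀ i, v i ∈ pos α) ∧
    A = Matrix.of fun p q => ∑ i, (a i p q) • v i}

/-- The amplification `φ⁽ᵏ⁾` of a matrix-valued linear map, realized on the index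
type `Fin k × ι`. -/
def ampP {S : Type} [AddCommGroup S] [Module ℂ S] {k : ℕ} {ι : Type} [Fintype ι]
    (φ : S →ₗ[ℂ] Matrix ι ι ℂ) (M : Matrix (Fin k) (Fin k) S) :
    Matrix (Fin k × ι) (Fin k × ι) ℂ :=
  Matrix.of fun ip jq => φ (M ip.1 jq.1) ip.2 jq.2

end


noncomputable section LOSAux
namespace LOSAux

set_option linter.unusedSectionVars false

open Matrix

variable {V : Type} [AddCommGroup V] [Module ℂ V]

lemma blk_apply {n : ℕ} (A B C D : Matrix (Fin n) (Fin n) V) (i j : Fin (n+n)) :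
    blk A B C D i j =
      Matrix.fromBlocks A B C D (finSumFinEquiv.symm i) (finSumFinEquiv.symm j) := rfl

lemma blk_add {n : ℕ} (A B C D A' B' C' D' : Matrix (Fin n) (Fin n) V) :
    blk A B C D + blk A' B' C' D' = blk (A+A') (B+B') (C+C') (D+D') := by
  ext i j
  rcases h1 : finSumFinEquiv.symm i with p | p <;> rcases h2 : finSumFinEquiv.symm j with q | q <;>
    simp [blk_apply, Matrix.add_apply, h1, h2]

lemma blk_smul {n : ℕ} (c : ℂ) (A B C D : Matrix (Fin n) (Fin n) V) :
    c • blk A B C D = blk (c•A) (c•B) (c•C) (c•D) := by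
  ext i j
  rcases h1 : finSumFinEquiv.symm i with p | p <;> rcases h2 : finSumFinEquiv.symm j with q | q <;>
    simp [blk_apply, Matrix.smul_apply, h1, h2]

lemma blk_zero {n : ℕ} : blk (0 : Matrix (Fin n) (Fin n) V) 0 0 0 = 0 := by
  ext i j
  rcases h1 : finSumFinEquiv.symm i with p | p <;> rcases h2 : finSumFinEquiv.symm j with q | q <;>
    simp [blk_apply, h1, h2]

variable [StarAddMonoid V] [StarModule ℂ V]

lemma blk_star {n : ℕ} (A B C D : Matrix (Fin n) (Fin n) V) :
    star (blk A B C D) = blk (star A) (star C) (star B) (star D) := by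
  ext i j
  rcases h1 : finSumFinEquiv.symm i with p | p <;> rcases h2 : finSumFinEquiv.symm j with q | q <;>
    simp [blk_apply, h1, h2, Matrix.conjTranspose_apply, Matrix.star_eq_conjTranspose]

lemma diagE_split (e : V) (n : ℕ) :
    diagE e (n+n) = blk (diagE e n) 0 0 (diagE e n) := by
  ext i j
  rw [blk_apply]
  have hiff : ∀ a b : Fin (n+n), a = b ↔ finSumFinEquiv.symm a = finSumFinEquiv.symm b :=
    fun a b => (finSumFinEquiv.symm.injective.eq_iff).symm
  rcases h1 : finSumFinEquiv.symm i with p | p <;> rcases h2 : finSumFinEquiv.symm j with q | q <;>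
    simp [diagE, Matrix.diagonal_apply, hiff i j, h1, h2]

lemma star_diagE (e : V) (he : star e = e) (n : ℕ) : star (diagE e n) = diagE e n := by
  simp [diagE, Matrix.star_eq_conjTranspose, Matrix.diagonal_conjTranspose, Pi.star_def, he]

lemma sconj_perm {m : ℕ} (σ : Equiv.Perm (Fin m)) (A : Matrix (Fin m) (Fin m) V) :
    sconj (Matrix.of fun p i => if p = σ i then (1:ℂ) else 0) A =
      Matrix.of fun i j => A (σ i) (σ j) := by
  ext i j
  simp [sconj, apply_ite (starRingEnd ℂ), ite_mul, mul_ite, ite_smul, Finset.sum_ite_eq,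
    zero_smul, one_smul]

lemma sconj_diagonal {m : ℕ} (d : Fin m → ℂ) (A : Matrix (Fin m) (Fin m) V) :
    sconj (Matrix.diagonal d) A =
      Matrix.of fun i j => ((starRingEnd ℂ) (d i) * d j) • A i j := by
  ext i j
  simp [sconj, Matrix.diagonal_apply, apply_ite (starRingEnd ℂ), ite_mul, mul_ite, ite_smul,
    Finset.sum_ite_eq, zero_smul, one_smul]

/-- The hermitization block matrix `[[r e, X],[X*, r e]]`. -/
def matE (e : V) {n : ℕ} (r : ℝ) (X : Matrix (Fin n) (Fin n) V) :
    Matrix (Fin (n+n)) (Fin (n+n)) V :=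
  blk ((r:ℂ) • diagE e n) X (star X) ((r:ℂ) • diagE e n)

lemma matE_eq (e : V) {n : ℕ} (r : ℝ) (X : Matrix (Fin n) (Fin n) V) :
    matE e r X = (r:ℂ) • diagE e (n+n) + blk 0 X (star X) 0 := by
  rw [diagE_split, blk_smul, blk_add]
  simp [matE]

variable {Γ : Type} (S : LocalOpSys Γ V)

lemma E_mem (α : Γ) (n : ℕ) : diagE S.e n ∈ S.C α n := by
  obtain ⟨r, hr, h⟩ := S.unit α n (-(diagE S.e n))
    (by rw [star_neg, star_diagE _ S.eherm])
  have h1 : (r:ℂ) • diagE S.e n - -diagE S.e n = (((r+1:ℝ)):ℂ) • diagE S.e n := by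
    push_cast
    rw [add_smul, one_smul, sub_neg_eq_add]
  rw [h1] at h
  have h2 := (S.cone α n).2.2 (r+1)⁻¹ (by positivity) _ h
  rw [smul_smul, ← Complex.ofReal_mul, inv_mul_cancel₀ (by positivity), Complex.ofReal_one,
    one_smul] at h2
  exact h2

lemma smulE_mem (α : Γ) (n : ℕ) {r : ℝ} (hr : 0 ≤ r) :
    (r:ℂ) • diagE S.e n ∈ S.C α n :=
  (S.cone α n).2.2 r hr _ (E_mem S α n)

/-- The defining set of the seminorm. -/
def SS (α : Γ) {n : ℕ} (X : Matrix (Fin n) (Fin n) V) : Set ℝ :=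
  {r : ℝ | 0 ≤ r ∧ matE S.e r X ∈ S.C α (n+n)}

lemma nrm_eq (α : Γ) {n : ℕ} (X : Matrix (Fin n) (Fin n) V) :
    nrm S.C S.e α n X = sInf (SS S α X) := rfl

lemma star_HX {n : ℕ} (X : Matrix (Fin n) (Fin n) V) :
    star (blk 0 X (star X) 0) = blk 0 X (star X) 0 := by
  rw [blk_star, star_star, star_zero]

lemma SS_nonempty (α : Γ) {n : ℕ} (X : Matrix (Fin n) (Fin n) V) :
    (SS S α X).Nonempty := by
  obtain ⟨r, hr, h⟩ := S.unit α (n+n) (-(blk 0 X (star X) 0))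
    (by rw [star_neg, star_HX])
  refine ⟨r, hr.le, ?_⟩
  rw [matE_eq]
  rwa [sub_neg_eq_add] at h

lemma SS_bdd (α : Γ) {n : ℕ} (X : Matrix (Fin n) (Fin n) V) :
    BddBelow (SS S α X) := ⟨0, fun r hr => hr.1⟩

lemma SS_upward (α : Γ) {n : ℕ} {X : Matrix (Fin n) (Fin n) V} {r s : ℝ}
    (hr : r ∈ SS S α X) (hrs : r ≤ s) : s ∈ SS S α X := by
  refine ⟨hr.1.trans hrs, ?_⟩
  have h : matE S.e s X = matE S.e r X + (((s - r:ℝ)):ℂ) • diagE S.e (n+n) := by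
    rw [matE_eq, matE_eq]
    push_cast
    rw [sub_smul]
    abel
  rw [h]
  exact (S.cone _ _).2.1 _ hr.2 _ (smulE_mem S _ _ (by linarith))

lemma nrm_nonneg (α : Γ) {n : ℕ} (X : Matrix (Fin n) (Fin n) V) :
    0 ≤ nrm S.C S.e α n X :=
  Real.sInf_nonneg (fun _ hr => hr.1)

lemma nrm_mem (α : Γ) {n : ℕ} (X : Matrix (Fin n) (Fin n) V) :
    nrm S.C S.e α n X ∈ SS S α X := by
  refine ⟨nrm_nonneg S α X, ?_⟩
  apply S.arch
  intro s hs
  have h1 : (s:ℂ) • diagE S.e (n+n) + matE S.e (nrm S.C S.e α n X) X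
      = matE S.e (nrm S.C S.e α n X + s) X := by
    rw [matE_eq, matE_eq]
    push_cast
    rw [add_smul]
    abel
  rw [h1]
  obtain ⟨r, hrS, hrlt⟩ := exists_lt_of_csInf_lt (SS_nonempty S α X)
    (show sInf (SS S α X) < nrm S.C S.e α n X + s by
      rw [← nrm_eq]; linarith)
  exact (SS_upward S α hrS hrlt.le).2

lemma nrm_le (α : Γ) {n : ℕ} {X : Matrix (Fin n) (Fin n) V} {r : ℝ}
    (h : r ∈ SS S α X) : nrm S.C S.e α n X ≤ r :=
  csInf_le (SS_bdd S α X) h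

lemma nrm_tri (α : Γ) {n : ℕ} (X Y : Matrix (Fin n) (Fin n) V) :
    nrm S.C S.e α n (X + Y) ≤ nrm S.C S.e α n X + nrm S.C S.e α n Y := by
  apply nrm_le
  refine ⟨add_nonneg (nrm_nonneg S α X) (nrm_nonneg S α Y), ?_⟩
  have h : matE S.e (nrm S.C S.e α n X + nrm S.C S.e α n Y) (X + Y)
      = matE S.e (nrm S.C S.e α n X) X + matE S.e (nrm S.C S.e α n Y) Y := by
    have hb : blk (0:Matrix (Fin n) (Fin n) V) (X+Y) (star X + star Y) 0
        = blk 0 X (star X) 0 + blk 0 Y (star Y) 0 := by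
      rw [blk_add]; simp
    rw [matE_eq, matE_eq, matE_eq, star_add, hb]
    push_cast
    rw [add_smul]
    abel
  rw [h]
  exact (S.cone _ _).2.1 _ (nrm_mem S α X).2 _ (nrm_mem S α Y).2

/-- The block-swap permutation. -/
def swp (n : ℕ) : Equiv.Perm (Fin (n+n)) :=
  (finSumFinEquiv.symm.trans (Equiv.sumComm (Fin n) (Fin n))).trans finSumFinEquiv

lemma symm_swp (n : ℕ) (a : Fin (n+n)) :
    finSumFinEquiv.symm (swp n a) = Sum.swap (finSumFinEquiv.symm a) := by
  simp [swp]

lemma blk_swp {n : ℕ} (A B C D : Matrix (Fin n) (Fin n) V) (i j : Fin (n+n)) :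
    blk A B C D (swp n i) (swp n j) = blk D C B A i j := by
  rw [blk_apply, blk_apply, symm_swp, symm_swp]
  rcases finSumFinEquiv.symm i with p | p <;> rcases finSumFinEquiv.symm j with q | q <;> simp

lemma matE_star {n : ℕ} (r : ℝ) (X : Matrix (Fin n) (Fin n) V) :
    matE S.e r (star X) =
      sconj (Matrix.of fun p i => if p = swp n i then (1:ℂ) else 0) (matE S.e r X) := by
  rw [sconj_perm]
  ext i j
  show matE S.e r (star X) i j = matE S.e r X (swp n i) (swp n j)
  rw [matE, matE, blk_swp, star_star]

lemma SS_star_subset (α : Γ) {n : ℕ} (X : Matrix (Fin n) (Fin n) V) :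
    SS S α X ⊆ SS S α (star X) := by
  intro r hr
  refine ⟨hr.1, ?_⟩
  rw [matE_star]
  exact S.compat α _ _ _ _ hr.2

lemma nrm_star (α : Γ) {n : ℕ} (X : Matrix (Fin n) (Fin n) V) :
    nrm S.C S.e α n (star X) = nrm S.C S.e α n X := by
  refine le_antisymm (nrm_le S α (SS_star_subset S α X (nrm_mem S α X))) ?_
  have h := nrm_le S α (SS_star_subset S α (star X) (nrm_mem S α (star X)))
  rwa [star_star] at h

lemma matE_usmul {n : ℕ} (u : ℂ) (hu : (starRingEnd ℂ) u * u = 1)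
    (r : ℝ) (X : Matrix (Fin n) (Fin n) V) :
    matE S.e r (u • X) =
      sconj (Matrix.diagonal fun i =>
        Sum.elim (fun _ => (1:ℂ)) (fun _ => u) (finSumFinEquiv.symm i)) (matE S.e r X) := by
  rw [sconj_diagonal]
  ext i j
  show matE S.e r (u • X) i j = _
  rw [matE, matE, blk_apply]
  simp only [Matrix.of_apply, blk_apply]
  rcases h1 : finSumFinEquiv.symm i with p | p <;>
    rcases h2 : finSumFinEquiv.symm j with q | q <;>
      simp [h1, h2, Matrix.smul_apply, Matrix.conjTranspose_apply,
        Matrix.star_eq_conjTranspose, star_smul, Complex.star_def, smul_smul, hu, mul_comm]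

lemma nrm_usmul (α : Γ) {n : ℕ} (u : ℂ) (hu : (starRingEnd ℂ) u * u = 1)
    (X : Matrix (Fin n) (Fin n) V) :
    nrm S.C S.e α n (u • X) = nrm S.C S.e α n X := by
  have key : ∀ (w : ℂ), (starRingEnd ℂ) w * w = 1 → ∀ Y : Matrix (Fin n) (Fin n) V,
      SS S α Y ⊆ SS S α (w • Y) := by
    intro w hw Y r hr
    refine ⟨hr.1, ?_⟩
    rw [matE_usmul S w hw]
    exact S.compat α _ _ _ _ hr.2
  refine le_antisymm (nrm_le S α (key u hu X (nrm_mem S α X))) ?_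
  have hu' : (starRingEnd ℂ) ((starRingEnd ℂ) u) * (starRingEnd ℂ) u = 1 := by
    rw [Complex.conj_conj, mul_comm]
    exact hu
  have h2 := nrm_le S α (key ((starRingEnd ℂ) u) hu' (u • X) (nrm_mem S α (u • X)))
  rwa [smul_smul, hu, one_smul] at h2

lemma matE_rsmul {n : ℕ} (t r : ℝ) (X : Matrix (Fin n) (Fin n) V) :
    matE S.e (t*r) (((t:ℝ):ℂ) • X) = ((t:ℝ):ℂ) • matE S.e r X := by
  rw [matE, matE, blk_smul, smul_smul, star_smul, Complex.star_def, Complex.conj_ofReal,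
    ← Complex.ofReal_mul]

lemma nrm_rsmul_le (α : Γ) {n : ℕ} (t : ℝ) (ht : 0 ≤ t) (X : Matrix (Fin n) (Fin n) V) :
    nrm S.C S.e α n (((t:ℝ):ℂ) • X) ≤ t * nrm S.C S.e α n X := by
  apply nrm_le
  refine ⟨mul_nonneg ht (nrm_nonneg S α X), ?_⟩
  rw [matE_rsmul]
  exact (S.cone _ _).2.2 t ht _ (nrm_mem S α X).2

lemma nrm_rsmul (α : Γ) {n : ℕ} (t : ℝ) (ht : 0 < t) (X : Matrix (Fin n) (Fin n) V) :
    nrm S.C S.e α n (((t:ℝ):ℂ) • X) = t * nrm S.C S.e α n X := by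
  refine le_antisymm (nrm_rsmul_le S α t ht.le X) ?_
  have h := nrm_rsmul_le S α t⁻¹ (by positivity) (((t:ℝ):ℂ) • X)
  rw [smul_smul, ← Complex.ofReal_mul, inv_mul_cancel₀ ht.ne', Complex.ofReal_one,
    one_smul] at h
  have := mul_le_mul_of_nonneg_left h ht.le
  rw [← mul_assoc, mul_inv_cancel₀ ht.ne', one_mul] at this
  linarith

lemma nrm_zero (α : Γ) (n : ℕ) : nrm S.C S.e α n (0 : Matrix (Fin n) (Fin n) V) = 0 := by
  refine le_antisymm (nrm_le S α ⟨le_refl 0, ?_⟩) (nrm_nonneg S α 0)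
  have h : matE S.e 0 (0 : Matrix (Fin n) (Fin n) V) = 0 := by
    rw [matE_eq, star_zero, blk_zero]
    simp
  rw [h]
  exact (S.cone _ _).1

lemma nrm_smul (α : Γ) {n : ℕ} (c : ℂ) (X : Matrix (Fin n) (Fin n) V) :
    nrm S.C S.e α n (c • X) = ‖c‖ * nrm S.C S.e α n X := by
  by_cases hc : c = 0
  · subst hc
    rw [zero_smul, nrm_zero, norm_zero, zero_mul]
  · have hnc : (0:ℝ) < ‖c‖ := norm_pos_iff.mpr hc
    set u : ℂ := c / (‖c‖ : ℂ) with hu_def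
    have hne : ((‖c‖:ℝ):ℂ) ≠ 0 := Complex.ofReal_ne_zero.mpr hnc.ne'
    have hcu : c • X = ((‖c‖:ℝ):ℂ) • (u • X) := by
      have hcc : ((‖c‖:ℝ):ℂ) * u = c := by
        rw [hu_def]
        field_simp
      rw [smul_smul, hcc]
    have hu : (starRingEnd ℂ) u * u = 1 := by
      rw [hu_def, map_div₀, Complex.conj_ofReal]
      rw [div_mul_div_comm, mul_comm, Complex.mul_conj, ← Complex.ofReal_mul]
      rw [Complex.normSq_eq_norm_sq]
      norm_cast
      rw [pow_two, div_self (mul_ne_zero hnc.ne' hnc.ne')]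
    rw [hcu, nrm_rsmul S α _ hnc, nrm_usmul S α u hu]

lemma nrm_sep {n : ℕ} (X : Matrix (Fin n) (Fin n) V)
    (h : ∀ α : Γ, nrm S.C S.e α n X = 0) : X = 0 := by
  have hmem : ∀ α, blk 0 X (star X) 0 ∈ S.C α (n+n) := by
    intro α
    have h1 := (nrm_mem S α X).2
    rw [h α, matE_eq, Complex.ofReal_zero, zero_smul, zero_add] at h1
    exact h1
  have hneg : ∀ α, -(blk 0 X (star X) 0) ∈ S.C α (n+n) := by
    intro α
    have h0 : nrm S.C S.e α n ((-1 : ℂ) • X) = 0 := by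
      rw [nrm_smul, h α, mul_zero]
    have h1 := (nrm_mem S α ((-1:ℂ) • X)).2
    rw [h0, matE_eq, Complex.ofReal_zero, zero_smul, zero_add] at h1
    have h2 : blk 0 ((-1:ℂ) • X) (star ((-1:ℂ) • X)) 0 = -(blk 0 X (star X) 0) := by
      have hs : star ((-1:ℂ) • X) = -(star X) := by
        rw [star_smul]
        simp
      rw [hs, neg_one_smul]
      ext i j
      rcases ha : finSumFinEquiv.symm i with p | p <;>
        rcases hb : finSumFinEquiv.symm j with q | q <;>
          simp [blk_apply, Matrix.neg_apply, ha, hb]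
    rwa [h2] at h1
  have hz := S.proper (n+n) _ (fun α => ⟨hmem α, hneg α⟩)
  ext p q
  have h5 : blk (0 : Matrix (Fin n) (Fin n) V) X (star X) 0
      (finSumFinEquiv (Sum.inl p)) (finSumFinEquiv (Sum.inr q)) = 0 := by
    rw [hz]; rfl
  rw [blk_apply, Equiv.symm_apply_apply, Equiv.symm_apply_apply] at h5
  simpa using h5

end LOSAux
end LOSAux

/-- the cone-induced matrix seminorms of a local operator system form a
separating family of *-seminorms. -/
theorem statement0 {Γ V : Type} [AddCommGroup V] [Module ℂ V] [StarAddMonoid V]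
    [StarModule ℂ V] (S : LocalOpSys Γ V) :
    (∀ (α : Γ) (n : ℕ) (X Y : Matrix (Fin n) (Fin n) V),
        nrm S.C S.e α n (X + Y) ≤ nrm S.C S.e α n X + nrm S.C S.e α n Y) ∧
    (∀ (α : Γ) (n : ℕ) (c : ℂ) (X : Matrix (Fin n) (Fin n) V),
        nrm S.C S.e α n (c • X) = ‖c‖ * nrm S.C S.e α n X) ∧
    (∀ (α : Γ) (n : ℕ) (X : Matrix (Fin n) (Fin n) V), 0 ≤ nrm S.C S.e α n X) ∧
    (∀ (α : Γ) (n : ℕ) (X : Matrix (Fin n) (Fin n) V),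
        nrm S.C S.e α n (star X) = nrm S.C S.e α n X) ∧
    (∀ (n : ℕ) (X : Matrix (Fin n) (Fin n) V),
        (∀ α : Γ, nrm S.C S.e α n X = 0) → X = 0) :=
  ⟨fun α _ X Y => LOSAux.nrm_tri S α X Y,
   fun α _ c X => LOSAux.nrm_smul S α c X,
   fun α _ X => LOSAux.nrm_nonneg S α X,
   fun α _ X => LOSAux.nrm_star S α X,
   fun _ X h => LOSAux.nrm_sep S X h⟩
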